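/- Lower bound on the total rate in the transient regime (equations (xll4b)–(xll4d)). Let δ₁ ∈ (0,1) and define ρper(s)² = δ₁²/v̂per₊(s) + (2−δ₁)²/vper₋(s), ρ⁰(t,s)² = δ₁²/v̂₊(t,s) + (2−δ₁)²/v₋(s,0), β₁ = δ₁ √(v̂per₊(t)) / v̄ and β₂ = (2−δ₁) √(vper₋(0)) / v̄, where v̄ = max_{[0,T]} v*. Then for all 0 < s < t one has ρ⁰(t,s)² ≥ inf_{w∈[0,T]} ρper(w)² + β₁² e^{−2α(t,s)} + β₂² e^{−2α(s)} ≥ inf_{w∈[0,T]} ρper(w)² + 2 β₁ β₂ e^{−α(t)}. -/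

import Mathlib

open MeasureTheory intervalIntegral

private lemma aux_div (c A x V : ℝ) (hc : 0 ≤ c) (hAx : 0 < A - x) (hA : 0 < A)
    (hAV : A ≤ V) (hx : 0 ≤ x) : c / A + c * x / V ^ 2 ≤ c / (A - x) := by
  have hV : 0 < V := lt_of_lt_of_le hA hAV
  have h1 : A * (A - x) ≤ V * V :=
    mul_le_mul hAV (by linarith) hAx.le (by linarith)
  have h2 : 0 ≤ c * x * (V * V - A * (A - x)) :=
    mul_nonneg (mul_nonneg hc hx) (by linarith)
  rw [div_add_div _ _ (ne_of_gt hA) (by positivity), div_le_div_iff₀ (by positivity) hAx]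
  nlinarith [h2]

set_option maxHeartbeats 2000000 in
/-- Lower bound on the total rate in the transient regime
(equations (xll4b)–(xll4d)). -/
theorem transient_rate_lower_bound
    (T : ℝ) (hT : 0 < T) (a g : ℝ → ℝ)
    (ha : Continuous a) (hg : Continuous g)
    (haper : ∀ t, a (t + T) = a t) (hgper : ∀ t, g (t + T) = g t)
    (a0 g0 : ℝ) (ha0 : 0 < a0) (hg0 : 0 < g0)
    (halb : ∀ t, a0 ≤ a t) (hglb : ∀ t, g0 ≤ g t)
    (α : ℝ → ℝ) (hα : ∀ t, α t = ∫ u in (0:ℝ)..t, a u)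
    (lam : ℝ) (hlam : lam = α T / T)
    (vstar : ℝ → ℝ) (hvstar : ∀ t, vstar t = g t ^ 2 / (2 * a t))
    (vbar : ℝ) (hvbar : IsGreatest (vstar '' Set.Icc 0 T) vbar)
    (vper : ℝ → ℝ)
    (hvper : ∀ t, vper t = (1 - Real.exp (-2 * lam * T))⁻¹ *
      ∫ s in t..t + T, Real.exp (-2 * (α (t + T) - α s)) * g s ^ 2)
    (vhatper : ℝ → ℝ)
    (hvhatper : ∀ t, vhatper t = (Real.exp (2 * lam * T) - 1)⁻¹ *
      ∫ s in t..t + T, Real.exp (2 * (α (t + T) - α s)) * g s ^ 2)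
    (vm : ℝ → ℝ → ℝ)
    (hvm : ∀ t t0, vm t t0 = ∫ s in t0..t, Real.exp (-2 * (α t - α s)) * g s ^ 2)
    (vhat : ℝ → ℝ → ℝ)
    (hvhat : ∀ t s, vhat t s = ∫ u in s..t, Real.exp (-2 * (α u - α s)) * g u ^ 2)
    (δ₁ : ℝ) (hδ₁ : 0 < δ₁) (hδ₁1 : δ₁ < 1)
    (rmin : ℝ)
    (hrmin : IsLeast
      ((fun w => δ₁ ^ 2 / vhatper w + (2 - δ₁) ^ 2 / vper w) '' Set.Icc 0 T) rmin) :
    ∀ s t : ℝ, 0 < s → s < t →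
      (rmin + (δ₁ * Real.sqrt (vhatper t) / vbar) ^ 2 * Real.exp (-2 * (α t - α s))
            + ((2 - δ₁) * Real.sqrt (vper 0) / vbar) ^ 2 * Real.exp (-2 * α s)
          ≤ δ₁ ^ 2 / vhat t s + (2 - δ₁) ^ 2 / vm s 0)
      ∧ (rmin + 2 * (δ₁ * Real.sqrt (vhatper t) / vbar)
              * ((2 - δ₁) * Real.sqrt (vper 0) / vbar) * Real.exp (-(α t))
          ≤ rmin + (δ₁ * Real.sqrt (vhatper t) / vbar) ^ 2 * Real.exp (-2 * (α t - α s))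
            + ((2 - δ₁) * Real.sqrt (vper 0) / vbar) ^ 2 * Real.exp (-2 * α s)) := by
  -- basic facts about α
  have hαfun : α = fun u => ∫ v in (0:ℝ)..u, a v := funext hα
  have hαd : ∀ x, HasDerivAt α (a x) x := by
    intro x
    rw [hαfun]
    exact intervalIntegral.integral_hasDerivAt_right (ha.intervalIntegrable _ _)
      (ha.stronglyMeasurableAtFilter _ _) ha.continuousAt
  have hαc : Continuous α := continuous_iff_continuousAt.2 fun x => (hαd x).continuousAt
  have hαsub : ∀ p q : ℝ, α q - α p = ∫ u in p..q, a u := by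
    intro p q
    rw [hα p, hα q, intervalIntegral.integral_interval_sub_left (ha.intervalIntegrable _ _)
      (ha.intervalIntegrable _ _)]
  have hαadd : ∀ u, α (u + T) = α u + α T := by
    intro u
    have h1 : α (u + T) - α u = ∫ x in u..u+T, a x := hαsub u (u+T)
    have h2 : (∫ x in u..u+T, a x) = ∫ x in (0:ℝ)..0+T, a x :=
      Function.Periodic.intervalIntegral_add_eq haper u 0
    rw [h2] at h1
    simp only [zero_add] at h1
    rw [← hα T] at h1
    linarith
  have hα0 : α 0 = 0 := by rw [hα]; simp
  have hαTpos : 0 < α T := by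
    have h1 : a0 * T ≤ α T := by
      rw [hα T]
      calc a0 * T = ∫ _ in (0:ℝ)..T, a0 := by simp [mul_comm]
        _ ≤ ∫ u in (0:ℝ)..T, a u :=
          intervalIntegral.integral_mono_on hT.le (intervalIntegrable_const)
            (ha.intervalIntegrable _ _) (fun x _ => halb x)
    nlinarith
  have hlT : lam * T = α T := by rw [hlam]; field_simp
  have hZ1 : 1 < Real.exp (2 * α T) := Real.one_lt_exp_iff.2 (by positivity)
  have hZpos : 0 < Real.exp (2 * α T) := Real.exp_pos _
  have hZinv : (Real.exp (2 * α T))⁻¹ < 1 := by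
    rw [inv_lt_one_iff₀]; right; exact hZ1
  -- continuity of integrands
  have hcI : Continuous (fun u => Real.exp (-(2 * α u)) * g u ^ 2) :=
    (Real.continuous_exp.comp (continuous_const.mul hαc).neg).mul (hg.pow 2)
  have hcJ : Continuous (fun u => Real.exp (2 * α u) * g u ^ 2) :=
    (Real.continuous_exp.comp (continuous_const.mul hαc)).mul (hg.pow 2)
  have hc1 : ∀ c : ℝ, Continuous fun u => Real.exp (2 * (c - α u)) := fun c =>
    Real.continuous_exp.comp (continuous_const.mul (continuous_const.sub hαc))
  have hc2 : ∀ c : ℝ, Continuous fun u => Real.exp (-2 * (c - α u)) := fun c =>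
    Real.continuous_exp.comp (continuous_const.mul (continuous_const.sub hαc))
  -- positivity of integrals
  have hIpos : ∀ (h : ℝ → ℝ), Continuous h → ∀ p q : ℝ, p < q →
      0 < ∫ u in p..q, Real.exp (h u) * g u ^ 2 := by
    intro h hh p q hpq
    apply intervalIntegral.intervalIntegral_pos_of_pos_on
    · exact ((Real.continuous_exp.comp hh).mul (hg.pow 2)).intervalIntegrable _ _
    · intro x _
      have hgx : 0 < g x := lt_of_lt_of_le hg0 (hglb x)
      positivity
    · exact hpq
  -- shift lemmas
  have hIshift : ∀ p q : ℝ,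
      (∫ u in p+T..q+T, Real.exp (-(2 * α u)) * g u ^ 2)
        = (Real.exp (2 * α T))⁻¹ * ∫ u in p..q, Real.exp (-(2 * α u)) * g u ^ 2 := by
    intro p q
    rw [← Real.exp_neg,
      ← intervalIntegral.integral_comp_add_right (fun u => Real.exp (-(2 * α u)) * g u ^ 2) T,
      ← intervalIntegral.integral_const_mul]
    apply intervalIntegral.integral_congr
    intro x _
    beta_reduce
    rw [hgper x, hαadd x,
      show -(2 * (α x + α T)) = -(2 * α T) + -(2 * α x) from by ring, Real.exp_add]
    ring
  have hJshift : ∀ p q : ℝ,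
      (∫ u in p+T..q+T, Real.exp (2 * α u) * g u ^ 2)
        = Real.exp (2 * α T) * ∫ u in p..q, Real.exp (2 * α u) * g u ^ 2 := by
    intro p q
    rw [← intervalIntegral.integral_comp_add_right (fun u => Real.exp (2 * α u) * g u ^ 2) T,
      ← intervalIntegral.integral_const_mul]
    apply intervalIntegral.integral_congr
    intro x _
    beta_reduce
    rw [hgper x, hαadd x,
      show 2 * (α x + α T) = 2 * α T + 2 * α x from by ring, Real.exp_add]
    ring
  -- normalized forms
  have hvhat' : ∀ q p : ℝ, vhat q p
      = Real.exp (2 * α p) * ∫ u in p..q, Real.exp (-(2 * α u)) * g u ^ 2 := by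
    intro q p
    rw [hvhat, ← intervalIntegral.integral_const_mul]
    apply intervalIntegral.integral_congr
    intro x _
    beta_reduce
    rw [show (-2 : ℝ) * (α x - α p) = 2 * α p + -(2 * α x) from by ring, Real.exp_add]
    ring
  have hvm' : ∀ p : ℝ, vm p 0
      = Real.exp (-(2 * α p)) * ∫ u in (0:ℝ)..p, Real.exp (2 * α u) * g u ^ 2 := by
    intro p
    rw [hvm, ← intervalIntegral.integral_const_mul]
    apply intervalIntegral.integral_congr
    intro x _
    beta_reduce
    rw [show (-2 : ℝ) * (α p - α x) = -(2 * α p) + 2 * α x from by ring, Real.exp_add]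
    ring
  have hvhatper' : ∀ w : ℝ, vhatper w = (Real.exp (2 * α T) - 1)⁻¹ *
      (Real.exp (2 * α (w + T)) * ∫ u in w..w+T, Real.exp (-(2 * α u)) * g u ^ 2) := by
    intro w
    rw [hvhatper, show (2 : ℝ) * lam * T = 2 * α T from by rw [mul_assoc, hlT]]
    congr 1
    rw [← intervalIntegral.integral_const_mul]
    apply intervalIntegral.integral_congr
    intro x _
    beta_reduce
    rw [show (2 : ℝ) * (α (w + T) - α x) = 2 * α (w + T) + -(2 * α x) from by ring,
      Real.exp_add]
    ring
  have hvper' : ∀ w : ℝ, vper w = (1 - (Real.exp (2 * α T))⁻¹)⁻¹ *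
      (Real.exp (-(2 * α (w + T))) * ∫ u in w..w+T, Real.exp (2 * α u) * g u ^ 2) := by
    intro w
    rw [hvper, show (-2 : ℝ) * lam * T = -(2 * α T) from by rw [neg_mul, neg_mul, mul_assoc, hlT],
      Real.exp_neg]
    congr 1
    rw [← intervalIntegral.integral_const_mul]
    apply intervalIntegral.integral_congr
    intro x _
    beta_reduce
    rw [show (-2 : ℝ) * (α (w + T) - α x) = -(2 * α (w + T)) + 2 * α x from by ring,
      Real.exp_add]
    ring
  -- positivity of the four quantities
  have hvhatperpos : ∀ w : ℝ, 0 < vhatper w := by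
    intro w
    rw [hvhatper']
    have h1 := hIpos (fun u => -(2 * α u)) (continuous_const.mul hαc).neg w (w + T) (by linarith)
    exact mul_pos (inv_pos.2 (by linarith)) (mul_pos (Real.exp_pos _) h1)
  have hvperpos : ∀ w : ℝ, 0 < vper w := by
    intro w
    rw [hvper']
    have h1 := hIpos (fun u => 2 * α u) (continuous_const.mul hαc) w (w + T) (by linarith)
    have h2 : (0:ℝ) < 1 - (Real.exp (2 * α T))⁻¹ := by linarith
    exact mul_pos (inv_pos.2 h2) (mul_pos (Real.exp_pos _) h1)
  -- periodicity of vhatper, vper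
  have hvhatperper : ∀ w : ℝ, vhatper (w + T) = vhatper w := by
    intro w
    rw [hvhatper' (w + T), hvhatper' w, hIshift w (w + T), hαadd (w + T),
      show (2:ℝ) * (α (w+T) + α T) = 2 * α (w+T) + 2 * α T from by ring, Real.exp_add]
    generalize (∫ u in w..w+T, Real.exp (-(2 * α u)) * g u ^ 2) = X
    have hz : Real.exp (2 * α T) ≠ 0 := hZpos.ne'
    have hz1 : Real.exp (2 * α T) - 1 ≠ 0 := by linarith
    field_simp
  have hvperper : ∀ w : ℝ, vper (w + T) = vper w := by
    intro w
    rw [hvper' (w + T), hvper' w, hJshift w (w + T), hαadd (w + T),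
      show -(2 * (α (w+T) + α T)) = -(2 * α (w+T)) + -(2 * α T) from by ring, Real.exp_add,
      Real.exp_neg (2 * α T)]
    generalize (∫ u in w..w+T, Real.exp (2 * α u) * g u ^ 2) = X
    have hz : Real.exp (2 * α T) ≠ 0 := hZpos.ne'
    have hz1 : Real.exp (2 * α T) - 1 ≠ 0 := by linarith
    have hz2 : 1 - (Real.exp (2 * α T))⁻¹ ≠ 0 := by
      have : (0:ℝ) < 1 - (Real.exp (2 * α T))⁻¹ := by linarith
      linarith
    field_simp
  -- rmin is a lower bound everywhere
  have hrb : ∀ x : ℝ, rmin ≤ δ₁ ^ 2 / vhatper x + (2 - δ₁) ^ 2 / vper x := by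
    intro x
    have hper : Function.Periodic (fun w => (vhatper w, vper w)) T := by
      intro w; simp [hvhatperper w, hvperper w]
    obtain ⟨y, hy, hxy⟩ := hper.exists_mem_Ico₀ hT x
    have h1 : vhatper x = vhatper y := congrArg Prod.fst hxy
    have h2 : vper x = vper y := congrArg Prod.snd hxy
    rw [h1, h2]
    exact hrmin.2 ⟨y, ⟨hy.1, hy.2.le⟩, rfl⟩
  -- vbar facts
  have hvstarper : Function.Periodic vstar T := by
    intro x; rw [hvstar, hvstar, haper, hgper]
  have hvstarle : ∀ x : ℝ, vstar x ≤ vbar := by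
    intro x
    obtain ⟨y, hy, hxy⟩ := hvstarper.exists_mem_Ico₀ hT x
    rw [hxy]
    exact hvbar.2 ⟨y, ⟨hy.1, hy.2.le⟩, rfl⟩
  have hvbarpos : 0 < vbar := by
    obtain ⟨w0, _, hw0⟩ := hvbar.1
    have hga : 0 < g w0 := lt_of_lt_of_le hg0 (hglb w0)
    have haa : 0 < a w0 := lt_of_lt_of_le ha0 (halb w0)
    rw [← hw0, hvstar]
    positivity
  have hgsq : ∀ u : ℝ, g u ^ 2 ≤ 2 * a u * vbar := by
    intro u
    have h1 := hvstarle u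
    rw [hvstar] at h1
    have hau : 0 < a u := lt_of_lt_of_le ha0 (halb u)
    rw [div_le_iff₀ (by positivity)] at h1
    linarith
  -- FTC evaluations
  have key1 : ∀ w : ℝ,
      (∫ u in w..w+T, Real.exp (2 * (α (w+T) - α u)) * (2 * a u))
        = Real.exp (2 * α T) - 1 := by
    intro w
    rw [intervalIntegral.integral_eq_sub_of_hasDerivAt
      (f := fun u => -Real.exp (2 * (α (w+T) - α u)))
      (f' := fun u => Real.exp (2 * (α (w+T) - α u)) * (2 * a u))
      (fun x _ => by
        have h1 : HasDerivAt (fun u => 2 * (α (w+T) - α u)) (2 * -(a x)) x :=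
          ((hαd x).const_sub (α (w+T))).const_mul 2
        have h2 : HasDerivAt (fun u => Real.exp (2 * (α (w+T) - α u)))
            (Real.exp (2 * (α (w+T) - α x)) * (2 * -(a x))) x := h1.exp
        have h3 : HasDerivAt (fun u => -Real.exp (2 * (α (w+T) - α u)))
            (Real.exp (2 * (α (w+T) - α x)) * (2 * a x)) x := by
          have h4 : HasDerivAt (fun u => -Real.exp (2 * (α (w+T) - α u)))
              (-(Real.exp (2 * (α (w+T) - α x)) * (2 * -(a x)))) x := h2.neg
          convert h4 using 1
          ring
        exact h3)
      (((hc1 (α (w+T))).mul (continuous_const.mul ha)).intervalIntegrable _ _)]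
    have e0 : 2 * (α (w+T) - α (w+T)) = 0 := by ring
    have e1 : 2 * (α (w+T) - α w) = 2 * α T := by rw [hαadd w]; ring
    rw [e0, e1, Real.exp_zero]
    ring
  have key1' : ∀ w : ℝ,
      (∫ u in w..w+T, Real.exp (-2 * (α (w+T) - α u)) * (2 * a u))
        = 1 - (Real.exp (2 * α T))⁻¹ := by
    intro w
    rw [intervalIntegral.integral_eq_sub_of_hasDerivAt
      (f := fun u => Real.exp (-2 * (α (w+T) - α u)))
      (f' := fun u => Real.exp (-2 * (α (w+T) - α u)) * (2 * a u))
      (fun x _ => by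
        have h1 : HasDerivAt (fun u => -2 * (α (w+T) - α u)) (-2 * -(a x)) x :=
          ((hαd x).const_sub (α (w+T))).const_mul (-2)
        have h2 : HasDerivAt (fun u => Real.exp (-2 * (α (w+T) - α u)))
            (Real.exp (-2 * (α (w+T) - α x)) * (-2 * -(a x))) x := h1.exp
        have h3 : HasDerivAt (fun u => Real.exp (-2 * (α (w+T) - α u)))
            (Real.exp (-2 * (α (w+T) - α x)) * (2 * a x)) x := by
          convert h2 using 1
          ring
        exact h3)
      (((hc2 (α (w+T))).mul (continuous_const.mul ha)).intervalIntegrable _ _)]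
    have e0 : -2 * (α (w+T) - α (w+T)) = 0 := by ring
    have e1 : -2 * (α (w+T) - α w) = -(2 * α T) := by rw [hαadd w]; ring
    rw [e0, e1, Real.exp_zero, Real.exp_neg]
  -- upper bounds by vbar
  have hvhatperle : ∀ w : ℝ, vhatper w ≤ vbar := by
    intro w
    have hmono : (∫ u in w..w+T, Real.exp (2 * (α (w+T) - α u)) * g u ^ 2)
        ≤ ∫ u in w..w+T, Real.exp (2 * (α (w+T) - α u)) * (2 * a u) * vbar := by
      apply intervalIntegral.integral_mono_on (by linarith)
      · exact ((hc1 (α (w+T))).mul (hg.pow 2)).intervalIntegrable _ _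
      · exact (((hc1 (α (w+T))).mul (continuous_const.mul ha)).mul
          continuous_const).intervalIntegrable _ _
      · intro x _
        have h1 := hgsq x
        nlinarith [Real.exp_pos (2 * (α (w+T) - α x))]
    rw [intervalIntegral.integral_mul_const, key1 w] at hmono
    rw [hvhatper, show (2 : ℝ) * lam * T = 2 * α T from by rw [mul_assoc, hlT]]
    rw [inv_mul_le_iff₀ (by linarith)]
    exact hmono.trans (le_of_eq (by ring))
  have hvperle : ∀ w : ℝ, vper w ≤ vbar := by
    intro w
    have hmono : (∫ u in w..w+T, Real.exp (-2 * (α (w+T) - α u)) * g u ^ 2)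
        ≤ ∫ u in w..w+T, Real.exp (-2 * (α (w+T) - α u)) * (2 * a u) * vbar := by
      apply intervalIntegral.integral_mono_on (by linarith)
      · exact ((hc2 (α (w+T))).mul (hg.pow 2)).intervalIntegrable _ _
      · exact (((hc2 (α (w+T))).mul (continuous_const.mul ha)).mul
          continuous_const).intervalIntegrable _ _
      · intro x _
        have h1 := hgsq x
        nlinarith [Real.exp_pos (-2 * (α (w+T) - α x))]
    rw [intervalIntegral.integral_mul_const, key1' w] at hmono
    rw [hvper, show (-2 : ℝ) * lam * T = -(2 * α T) from by
      rw [neg_mul, neg_mul, mul_assoc, hlT], Real.exp_neg]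
    have h2 : (0:ℝ) < 1 - (Real.exp (2 * α T))⁻¹ := by linarith
    rw [inv_mul_le_iff₀ h2]
    exact hmono.trans (le_of_eq (by ring))
  -- the two key identities
  have hvhatid : ∀ p q : ℝ, vhat q p
      = vhatper p - Real.exp (-2 * (α q - α p)) * vhatper q := by
    intro p q
    have e1 : (∫ u in p..p+T, Real.exp (-(2 * α u)) * g u ^ 2)
        = (∫ u in p..q, Real.exp (-(2 * α u)) * g u ^ 2)
          + ∫ u in q..p+T, Real.exp (-(2 * α u)) * g u ^ 2 :=
      (intervalIntegral.integral_add_adjacent_intervals (hcI.intervalIntegrable _ _)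
        (hcI.intervalIntegrable _ _)).symm
    have e2 : (∫ u in q..q+T, Real.exp (-(2 * α u)) * g u ^ 2)
        = (∫ u in q..p+T, Real.exp (-(2 * α u)) * g u ^ 2)
          + (Real.exp (2 * α T))⁻¹ * ∫ u in p..q, Real.exp (-(2 * α u)) * g u ^ 2 := by
      rw [← hIshift p q]
      exact (intervalIntegral.integral_add_adjacent_intervals (hcI.intervalIntegrable _ _)
        (hcI.intervalIntegrable _ _)).symm
    rw [hvhat' q p, hvhatper' p, hvhatper' q, e1, e2, hαadd p, hαadd q,
      show (2:ℝ) * (α p + α T) = 2 * α p + 2 * α T from by ring,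
      show (2:ℝ) * (α q + α T) = 2 * α q + 2 * α T from by ring,
      show (-2:ℝ) * (α q - α p) = 2 * α p + -(2 * α q) from by ring,
      Real.exp_add, Real.exp_add, Real.exp_add, Real.exp_neg]
    have hy : Real.exp (2 * α q) ≠ 0 := (Real.exp_pos _).ne'
    have hz : Real.exp (2 * α T) ≠ 0 := hZpos.ne'
    have hz1 : Real.exp (2 * α T) - 1 ≠ 0 := by linarith
    generalize (∫ u in p..q, Real.exp (-(2 * α u)) * g u ^ 2) = X
    generalize (∫ u in q..p+T, Real.exp (-(2 * α u)) * g u ^ 2) = Y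
    field_simp
    ring
  have hvmid : ∀ p : ℝ, vm p 0 = vper p - Real.exp (-2 * α p) * vper 0 := by
    intro p
    have e1 : (∫ u in (0:ℝ)..0+T, Real.exp (2 * α u) * g u ^ 2)
        = (∫ u in (0:ℝ)..p, Real.exp (2 * α u) * g u ^ 2)
          + ∫ u in p..(0:ℝ)+T, Real.exp (2 * α u) * g u ^ 2 :=
      (intervalIntegral.integral_add_adjacent_intervals (hcJ.intervalIntegrable _ _)
        (hcJ.intervalIntegrable _ _)).symm
    have e2 : (∫ u in p..p+T, Real.exp (2 * α u) * g u ^ 2)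
        = (∫ u in p..(0:ℝ)+T, Real.exp (2 * α u) * g u ^ 2)
          + Real.exp (2 * α T) * ∫ u in (0:ℝ)..p, Real.exp (2 * α u) * g u ^ 2 := by
      rw [← hJshift 0 p]
      exact (intervalIntegral.integral_add_adjacent_intervals (hcJ.intervalIntegrable _ _)
        (hcJ.intervalIntegrable _ _)).symm
    rw [hvm' p, hvper' p, hvper' 0, e1, e2, hαadd p, hαadd 0, hα0,
      show -(2 * (α p + α T)) = -(2 * α p) + -(2 * α T) from by ring,
      show -(2 * ((0:ℝ) + α T)) = -(2 * α T) from by ring,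
      show (-2:ℝ) * α p = -(2 * α p) from by ring,
      Real.exp_add, Real.exp_neg (2 * α p), Real.exp_neg (2 * α T)]
    have hy : Real.exp (2 * α p) ≠ 0 := (Real.exp_pos _).ne'
    have hz : Real.exp (2 * α T) ≠ 0 := hZpos.ne'
    have hz1 : Real.exp (2 * α T) - 1 ≠ 0 := by linarith
    have hz2 : 1 - (Real.exp (2 * α T))⁻¹ ≠ 0 := by
      have : (0:ℝ) < 1 - (Real.exp (2 * α T))⁻¹ := by linarith
      linarith
    generalize (∫ u in (0:ℝ)..p, Real.exp (2 * α u) * g u ^ 2) = X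
    generalize (∫ u in p..(0:ℝ)+T, Real.exp (2 * α u) * g u ^ 2) = Y
    field_simp
    ring
  -- main proof
  intro s t hs hst
  have hApos := hvhatperpos s
  have hBpos := hvhatperpos t
  have hCpos := hvperpos s
  have hDpos := hvperpos 0
  have hvhatpos : 0 < vhat t s := by
    rw [hvhat' t s]
    have h1 := hIpos (fun u => -(2 * α u)) (continuous_const.mul hαc).neg s t hst
    positivity
  have hvmpos : 0 < vm s 0 := by
    rw [hvm' s]
    have h1 := hIpos (fun u => 2 * α u) (continuous_const.mul hαc) 0 s hs
    positivity
  have hεpos : 0 < Real.exp (-2 * (α t - α s)) := Real.exp_pos _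
  have hηpos : 0 < Real.exp (-2 * α s) := Real.exp_pos _
  have hsqB : Real.sqrt (vhatper t) ^ 2 = vhatper t := Real.sq_sqrt hBpos.le
  have hsqD : Real.sqrt (vper 0) ^ 2 = vper 0 := Real.sq_sqrt hDpos.le
  have hb1 : (δ₁ * Real.sqrt (vhatper t) / vbar) ^ 2
      = δ₁ ^ 2 * vhatper t / vbar ^ 2 := by
    rw [div_pow, mul_pow, hsqB]
  have hb2 : ((2 - δ₁) * Real.sqrt (vper 0) / vbar) ^ 2
      = (2 - δ₁) ^ 2 * vper 0 / vbar ^ 2 := by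
    rw [div_pow, mul_pow, hsqD]
  constructor
  · -- first inequality
    have hid1 := hvhatid s t
    have hid2 := hvmid s
    have hv1 : 0 < vhatper s - Real.exp (-2 * (α t - α s)) * vhatper t := hid1 ▸ hvhatpos
    have hv2 : 0 < vper s - Real.exp (-2 * α s) * vper 0 := hid2 ▸ hvmpos
    have c1 : δ₁ ^ 2 / vhatper s
        + δ₁ ^ 2 * (Real.exp (-2 * (α t - α s)) * vhatper t) / vbar ^ 2
        ≤ δ₁ ^ 2 / vhat t s := by
      rw [hid1]
      exact aux_div _ _ _ _ (by positivity) hv1 hApos (hvhatperle s) (by positivity)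
    have c2 : (2 - δ₁) ^ 2 / vper s
        + (2 - δ₁) ^ 2 * (Real.exp (-2 * α s) * vper 0) / vbar ^ 2
        ≤ (2 - δ₁) ^ 2 / vm s 0 := by
      rw [hid2]
      exact aux_div _ _ _ _ (by positivity) hv2 hCpos (hvperle s) (by positivity)
    have hr := hrb s
    rw [hb1, hb2]
    have e1 : δ₁ ^ 2 * vhatper t / vbar ^ 2 * Real.exp (-2 * (α t - α s))
        = δ₁ ^ 2 * (Real.exp (-2 * (α t - α s)) * vhatper t) / vbar ^ 2 := by ring
    have e2 : (2 - δ₁) ^ 2 * vper 0 / vbar ^ 2 * Real.exp (-2 * α s)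
        = (2 - δ₁) ^ 2 * (Real.exp (-2 * α s) * vper 0) / vbar ^ 2 := by ring
    rw [e1, e2]
    linarith
  · -- second inequality (AM-GM)
    have hp : Real.exp (-2 * (α t - α s)) = Real.exp (-(α t - α s)) ^ 2 := by
      rw [sq, ← Real.exp_add]; congr 1; ring
    have hq : Real.exp (-2 * α s) = Real.exp (-(α s)) ^ 2 := by
      rw [sq, ← Real.exp_add]; congr 1; ring
    have hpq : Real.exp (-(α t)) = Real.exp (-(α t - α s)) * Real.exp (-(α s)) := by
      rw [← Real.exp_add]; congr 1; ring
    set b1 := δ₁ * Real.sqrt (vhatper t) / vbar with hb1d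
    set b2 := (2 - δ₁) * Real.sqrt (vper 0) / vbar with hb2d
    set P := Real.exp (-(α t - α s)) with hPd
    set Q := Real.exp (-(α s)) with hQd
    rw [hp, hq, hpq]
    nlinarith [sq_nonneg (b1 * P - b2 * Q)]
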